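/- Let (θ, λ, w) ∈ Θ×Λ×W be feasible for the linearly-relaxed saddle-point problem with reduced Lagrangian L_r(θ,λ,w) = ⟨μ_θ - μ_{π_E}, c_w - T*_γ u_λ⟩, and let π_θ = π_{μ_θ}. Then δ_C(π_θ, π_E) - δ_C(π_A, π_E) ≤ ε_sad(θ,λ,w) + ε_approx, where ε_sad is the saddle-point residual and ε_approx ≤ (2/(1-γ))(β·min_{θ'} ‖μ_{θ'} - μ_{π_A}‖₁ + min_{λ'} ‖u_{λ'} - V^{π_θ}_{c_{i_θ}}‖_∞), with i_θ = argmax_i (ρ_{c_i}(π_θ) - ρ_{c_i}(π_E)). -/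

import Mathlib

open Finset

variable {X A : Type*} [Fintype X] [Fintype A] [DecidableEq X] [DecidableEq A]
  [Nonempty X] [Nonempty A]

/-- A finite discounted Markov decision process. -/
structure FinMDP (X A : Type*) [Fintype X] [Fintype A] where
  P : X → A → X → ℝ
  P_nonneg : ∀ x a x', 0 ≤ P x a x'
  P_sum : ∀ x a, ∑ x', P x a x' = 1
  ν : X → ℝ
  ν_nonneg : ∀ x, 0 ≤ ν x
  ν_sum : ∑ x, ν x = 1
  γ : ℝ
  γ_pos : 0 < γ
  γ_lt_one : γ < 1

/-- A stationary Markov policy. -/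
def FinMDP.IsPolicy (π : X → A → ℝ) : Prop :=
  (∀ x a, 0 ≤ π x a) ∧ ∀ x, ∑ a, π x a = 1

namespace FinMDP

variable (M : FinMDP X A)

/-- The state-action distribution at time `t` of policy `π` started from `ν'`. -/
noncomputable def saDist (ν' : X → ℝ) (π : X → A → ℝ) : ℕ → X × A → ℝ
  | 0 => fun p => ν' p.1 * π p.1 p.2
  | t + 1 => fun p => (∑ q : X × A, saDist ν' π t q * M.P q.1 q.2 p.1) * π p.1 p.2

/-- The normalized discounted occupancy measure of `π` started from `ν'`. -/
noncomputable def occFrom (ν' : X → ℝ) (π : X → A → ℝ) (p : X × A) : ℝ :=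
  (1 - M.γ) * ∑' t : ℕ, M.γ ^ t * M.saDist ν' π t p

/-- The normalized discounted occupancy measure of `π` (from the initial distribution). -/
noncomputable def occ (π : X → A → ℝ) : X × A → ℝ :=
  M.occFrom M.ν π

/-- The (normalized) value function of policy `π` for cost `c`. -/
noncomputable def value (c : X × A → ℝ) (π : X → A → ℝ) (x : X) : ℝ :=
  ∑ p : X × A, M.occFrom (fun y => if y = x then 1 else 0) π p * c p

/-- The total expected (normalized) discounted cost `ρ_c(π) = ⟨μ_π, c⟩`. -/
noncomputable def cost (c : X × A → ℝ) (π : X → A → ℝ) : ℝ :=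
  ∑ p : X × A, M.occ π p * c p

/-- The Bellman flow operator `T_γ μ = (1/(1-γ)) (B - γ P)ᵀ μ`. -/
noncomputable def Tflow (μ : X × A → ℝ) (x' : X) : ℝ :=
  (1 / (1 - M.γ)) * ((∑ a, μ (x', a)) - M.γ * ∑ p : X × A, μ p * M.P p.1 p.2 x')

/-- The adjoint operator `T*_γ u = (1/(1-γ)) (B - γ P) u`. -/
noncomputable def Tadj (u : X → ℝ) (p : X × A) : ℝ :=
  (1 / (1 - M.γ)) * (u p.1 - M.γ * ∑ x', M.P p.1 p.2 x' * u x')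

/-- `π` is an optimal policy for the forward RL problem with cost `c`. -/
def IsOptimal (c : X × A → ℝ) (π : X → A → ℝ) : Prop :=
  IsPolicy π ∧ ∀ π', IsPolicy π' → M.cost c π ≤ M.cost c π'

/-- The optimal value function `V*_c(x) = min_π V_c^π(x)`. -/
noncomputable def Vstar (c : X × A → ℝ) (x : X) : ℝ :=
  sInf {v | ∃ π, IsPolicy π ∧ v = M.value c π x}

end FinMDP

/-- The policy induced by a state-action distribution:
`π_μ(a|x) = μ(x,a) / ∑_{a'} μ(x,a')` (uniform on zero-mass states). -/
noncomputable def inducedPolicy (μ : X × A → ℝ) (x : X) (a : A) : ℝ :=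
  if (∑ a' : A, μ (x, a')) = 0 then (1 : ℝ) / (Fintype.card A)
  else μ (x, a) / ∑ a' : A, μ (x, a')

/-- `μ` is a probability distribution on state-action pairs. -/
def IsDist (μ : X × A → ℝ) : Prop := (∀ p, 0 ≤ μ p) ∧ ∑ p : X × A, μ p = 1

/-- Membership in the probability simplex `Δ_{[n]}`. -/
def simplexPt {n : ℕ} (w : Fin n → ℝ) : Prop := (∀ i, 0 ≤ w i) ∧ ∑ i, w i = 1

/-- The `ℓ¹` norm of a finitely supported vector. -/
noncomputable def l1 {ι : Type*} [Fintype ι] (f : ι → ℝ) : ℝ := ∑ i, |f i|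

/-- The `ℓ∞` norm of a finitely supported vector. -/
noncomputable def linf {ι : Type*} [Fintype ι] [Nonempty ι] (f : ι → ℝ) : ℝ :=
  Finset.univ.sup' Finset.univ_nonempty fun i => |f i|

/-- The cost `c_w = ∑ᵢ wᵢ cᵢ` parameterized by weights `w`. -/
noncomputable def costW {nc : ℕ} (c : Fin nc → X × A → ℝ) (w : Fin nc → ℝ) :
    X × A → ℝ :=
  fun p => ∑ i, w i * c i p

/-- The objective of the dual LP `(D_{π_E})`. -/
noncomputable def dualObj {nc : ℕ} (M : FinMDP X A) (c : Fin nc → X × A → ℝ)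
    (πE : X → A → ℝ) (u : X → ℝ) (w : Fin nc → ℝ) : ℝ :=
  ∑ p : X × A, M.occ πE p * (M.Tadj u p - costW c w p)

/-- Feasibility for the dual LP `(D_{π_E})`. -/
def dualFeasible {nc : ℕ} (M : FinMDP X A) (c : Fin nc → X × A → ℝ)
    (u : X → ℝ) (w : Fin nc → ℝ) : Prop :=
  simplexPt w ∧ ∀ p, 0 ≤ costW c w p - M.Tadj u p

/-- Optimality for the dual LP `(D_{π_E})`. -/
def dualOptimal {nc : ℕ} (M : FinMDP X A) (c : Fin nc → X × A → ℝ)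
    (πE : X → A → ℝ) (u : X → ℝ) (w : Fin nc → ℝ) : Prop :=
  dualFeasible M c u w ∧
    ∀ u' w', dualFeasible M c u' w' → dualObj M c πE u' w' ≤ dualObj M c πE u w

/-- The `C`-distance `δ_C(π, π_E) = max_i (ρ_{c_i}(π) - ρ_{c_i}(π_E))`. -/
noncomputable def gapMax {nc : ℕ} [NeZero nc] (M : FinMDP X A)
    (c : Fin nc → X × A → ℝ) (πE π : X → A → ℝ) : ℝ :=
  haveI : Nonempty (Fin nc) := ⟨⟨0, Nat.pos_of_ne_zero (NeZero.ne nc)⟩⟩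
  Finset.univ.sup' Finset.univ_nonempty fun i => M.cost (c i) π - M.cost (c i) πE

/-- `π_A` is an apprentice policy: it minimizes `δ_C(·, π_E)` over stationary policies. -/
def IsApprentice {nc : ℕ} [NeZero nc] (M : FinMDP X A)
    (c : Fin nc → X × A → ℝ) (πE πA : X → A → ℝ) : Prop :=
  FinMDP.IsPolicy πA ∧
    ∀ π, FinMDP.IsPolicy π → gapMax M c πE πA ≤ gapMax M c πE π

/-- The parameter set `Λ = {λ : ‖λ‖₂ ≤ β/√n_u}`. -/
def lamSet (nu : ℕ) (β : ℝ) : Set (Fin nu → ℝ) :=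
  {l | Real.sqrt (∑ k, l k ^ 2) ≤ β / Real.sqrt nu}

/-- The reduced Lagrangian `L_r(θ, λ, w) = ⟨μ_θ - μ_{π_E}, c_w - T*_γ u_λ⟩`. -/
noncomputable def Lr {nm nu nc : ℕ} (M : FinMDP X A)
    (Φ : Fin nm → X × A → ℝ) (Ψ : Fin nu → X → ℝ) (c : Fin nc → X × A → ℝ)
    (πE : X → A → ℝ) (θ : Fin nm → ℝ) (lam : Fin nu → ℝ) (w : Fin nc → ℝ) : ℝ :=
  ∑ p : X × A, ((∑ i, θ i * Φ i p) - M.occ πE p) *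
    ((∑ j, w j * c j p) - M.Tadj (fun x => ∑ k, lam k * Ψ k x) p)

/-- The saddle-point residual of a point `(θ, λ, w)` for the reduced Lagrangian. -/
noncomputable def epsSad {nm nu nc : ℕ} (M : FinMDP X A)
    (Φ : Fin nm → X × A → ℝ) (Ψ : Fin nu → X → ℝ) (c : Fin nc → X × A → ℝ)
    (πE : X → A → ℝ) (β : ℝ)
    (θ : Fin nm → ℝ) (lam : Fin nu → ℝ) (w : Fin nc → ℝ) : ℝ :=
  sSup {v | ∃ lam' ∈ lamSet nu β, ∃ w', simplexPt w' ∧ v = Lr M Φ Ψ c πE θ lam' w'} -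
    sInf {v | ∃ θ', simplexPt θ' ∧ v = Lr M Φ Ψ c πE θ' lam w}


set_option linter.unusedSectionVars false

namespace FinMDP

variable (M : FinMDP X A)

lemma one_sub_gamma_pos : (0:ℝ) < 1 - M.γ := by linarith [M.γ_lt_one]

lemma saDist_nonneg' {ν' : X → ℝ} {π : X → A → ℝ} (hν : ∀ x, 0 ≤ ν' x)
    (hπ : ∀ x a, 0 ≤ π x a) (t : ℕ) (p : X × A) : 0 ≤ M.saDist ν' π t p := by
  induction t generalizing p with
  | zero => exact mul_nonneg (hν p.1) (hπ p.1 p.2)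
  | succ t ih =>
    exact mul_nonneg (Finset.sum_nonneg fun q _ =>
      mul_nonneg (ih q) (M.P_nonneg q.1 q.2 p.1)) (hπ p.1 p.2)

lemma saDist_sum' {ν' : X → ℝ} {π : X → A → ℝ} (hπ : FinMDP.IsPolicy π) (t : ℕ) :
    ∑ p : X × A, M.saDist ν' π t p = ∑ x, ν' x := by
  induction t with
  | zero =>
    simp only [FinMDP.saDist]
    rw [Fintype.sum_prod_type]
    dsimp only
    exact Finset.sum_congr rfl fun x _ => by rw [← Finset.mul_sum, hπ.2, mul_one]
  | succ t ih =>
    simp only [FinMDP.saDist]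
    rw [Fintype.sum_prod_type]
    dsimp only
    have h1 : ∀ x : X, ∑ a, (∑ q : X × A, M.saDist ν' π t q * M.P q.1 q.2 x) * π x a
        = ∑ q : X × A, M.saDist ν' π t q * M.P q.1 q.2 x := fun x => by
      rw [← Finset.mul_sum, hπ.2, mul_one]
    simp only [h1]
    rw [Finset.sum_comm]
    have h2 : ∀ q : X × A, ∑ x, M.saDist ν' π t q * M.P q.1 q.2 x = M.saDist ν' π t q :=
      fun q => by rw [← Finset.mul_sum, M.P_sum, mul_one]
    simp only [h2]
    exact ih

lemma saDist_le' {ν' : X → ℝ} {π : X → A → ℝ} (hν : ∀ x, 0 ≤ ν' x)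
    (hπ : FinMDP.IsPolicy π) (t : ℕ) (p : X × A) :
    M.saDist ν' π t p ≤ ∑ x, ν' x := by
  rw [← M.saDist_sum' hπ t]
  exact Finset.single_le_sum (fun q _ => M.saDist_nonneg' hν hπ.1 t q) (Finset.mem_univ p)

lemma summable_saDist {ν' : X → ℝ} {π : X → A → ℝ} (hν : ∀ x, 0 ≤ ν' x)
    (hπ : FinMDP.IsPolicy π) (p : X × A) :
    Summable (fun t => M.γ ^ t * M.saDist ν' π t p) :=
  Summable.of_nonneg_of_le
    (fun t => mul_nonneg (pow_nonneg M.γ_pos.le _) (M.saDist_nonneg' hν hπ.1 t p))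
    (fun t => mul_le_mul_of_nonneg_left (M.saDist_le' hν hπ t p) (pow_nonneg M.γ_pos.le _))
    ((summable_geometric_of_lt_one M.γ_pos.le M.γ_lt_one).mul_right _)

lemma occFrom_nonneg {ν' : X → ℝ} {π : X → A → ℝ} (hν : ∀ x, 0 ≤ ν' x)
    (hπ : ∀ x a, 0 ≤ π x a) (p : X × A) : 0 ≤ M.occFrom ν' π p :=
  mul_nonneg M.one_sub_gamma_pos.le (tsum_nonneg fun t =>
    mul_nonneg (pow_nonneg M.γ_pos.le _) (M.saDist_nonneg' hν hπ t p))

lemma occFrom_sum {ν' : X → ℝ} {π : X → A → ℝ} (hν : ∀ x, 0 ≤ ν' x)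
    (hπ : FinMDP.IsPolicy π) :
    ∑ p : X × A, M.occFrom ν' π p = ∑ x, ν' x := by
  unfold FinMDP.occFrom
  rw [← Finset.mul_sum, ← Summable.tsum_finsetSum (fun p _ => M.summable_saDist hν hπ p)]
  have h1 : ∀ t : ℕ, ∑ p : X × A, M.γ ^ t * M.saDist ν' π t p = M.γ ^ t * ∑ x, ν' x :=
    fun t => by rw [← Finset.mul_sum, M.saDist_sum' hπ]
  simp only [h1]
  rw [tsum_mul_right, tsum_geometric_of_lt_one M.γ_pos.le M.γ_lt_one]
  rw [← mul_assoc, mul_inv_cancel₀ (ne_of_gt M.one_sub_gamma_pos), one_mul]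

/-- Backward (flow) recursion for the occupancy measure. -/
lemma occFrom_rec {ν' : X → ℝ} {π : X → A → ℝ} (hν : ∀ x, 0 ≤ ν' x)
    (hπ : FinMDP.IsPolicy π) (p : X × A) :
    M.occFrom ν' π p = (1 - M.γ) * (ν' p.1 * π p.1 p.2)
      + M.γ * ((∑ q : X × A, M.occFrom ν' π q * M.P q.1 q.2 p.1) * π p.1 p.2) := by
  unfold FinMDP.occFrom
  rw [Summable.tsum_eq_zero_add (M.summable_saDist hν hπ p)]
  have h2 : (∑' t : ℕ, M.γ ^ (t + 1) * M.saDist ν' π (t + 1) p)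
      = ∑ q : X × A, M.γ * ((∑' t : ℕ, M.γ ^ t * M.saDist ν' π t q)
          * (M.P q.1 q.2 p.1 * π p.1 p.2)) := by
    have h1 : ∀ t : ℕ, M.γ ^ (t + 1) * M.saDist ν' π (t + 1) p
        = ∑ q : X × A, M.γ * ((M.γ ^ t * M.saDist ν' π t q)
            * (M.P q.1 q.2 p.1 * π p.1 p.2)) := by
      intro t
      show M.γ ^ (t + 1) * ((∑ q : X × A, M.saDist ν' π t q * M.P q.1 q.2 p.1) * π p.1 p.2) = _
      rw [Finset.sum_mul, Finset.mul_sum]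
      exact Finset.sum_congr rfl fun q _ => by ring
    rw [tsum_congr h1, Summable.tsum_finsetSum (fun q _ => Summable.mul_left _
      (Summable.mul_right _ (M.summable_saDist hν hπ q)))]
    exact Finset.sum_congr rfl fun q _ => by rw [tsum_mul_left, tsum_mul_right]
  rw [h2, pow_zero, one_mul]
  show (1 - M.γ) * (ν' p.1 * π p.1 p.2 + _) = _
  rw [mul_add]
  congr 1
  rw [Finset.mul_sum, Finset.sum_mul, Finset.mul_sum]
  exact Finset.sum_congr rfl fun q _ => by ring

/-- Forward recursion for `saDist`. -/
lemma saDist_succ {ν' : X → ℝ} {π : X → A → ℝ} (t : ℕ) (p : X × A) :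
    M.saDist ν' π (t + 1) p
      = M.saDist (fun x' => ∑ q : X × A, (ν' q.1 * π q.1 q.2) * M.P q.1 q.2 x') π t p := by
  induction t generalizing p with
  | zero => simp only [FinMDP.saDist]
  | succ t ih =>
    show (∑ q : X × A, M.saDist ν' π (t + 1) q * M.P q.1 q.2 p.1) * π p.1 p.2 = _
    rw [Finset.sum_congr rfl fun q _ => by rw [ih q]]
    rfl

/-- Forward recursion for the occupancy measure. -/
lemma occFrom_front {ν' : X → ℝ} {π : X → A → ℝ} (hν : ∀ x, 0 ≤ ν' x)
    (hπ : FinMDP.IsPolicy π) (p : X × A) :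
    M.occFrom ν' π p = (1 - M.γ) * (ν' p.1 * π p.1 p.2)
      + M.γ * M.occFrom (fun x' => ∑ q : X × A, (ν' q.1 * π q.1 q.2) * M.P q.1 q.2 x') π p := by
  unfold FinMDP.occFrom
  rw [Summable.tsum_eq_zero_add (M.summable_saDist hν hπ p), pow_zero, one_mul]
  have h1 : (∑' t : ℕ, M.γ ^ (t + 1) * M.saDist ν' π (t + 1) p)
      = M.γ * ∑' t : ℕ, M.γ ^ t
          * M.saDist (fun x' => ∑ q : X × A, (ν' q.1 * π q.1 q.2) * M.P q.1 q.2 x') π t p := by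
    rw [← tsum_mul_left]
    exact tsum_congr fun t => by rw [M.saDist_succ t p, pow_succ]; ring
  rw [h1]
  show (1 - M.γ) * (ν' p.1 * π p.1 p.2 + _) = _
  ring

/-- Linearity of the occupancy measure in the initial distribution. -/
lemma occFrom_apply {ν' : X → ℝ} {π : X → A → ℝ} (hπ : FinMDP.IsPolicy π) (p : X × A) :
    M.occFrom ν' π p = ∑ x, ν' x * M.occFrom (fun y => if y = x then 1 else 0) π p := by
  have hδ : ∀ x : X, ∀ y : X, (0:ℝ) ≤ if y = x then 1 else 0 := fun x y => by positivity
  have h1 : ∀ t : ℕ, M.saDist ν' π t p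
      = ∑ x, ν' x * M.saDist (fun y => if y = x then (1:ℝ) else 0) π t p := by
    intro t
    induction t generalizing p with
    | zero =>
      show ν' p.1 * π p.1 p.2 = ∑ x, ν' x * ((if p.1 = x then (1:ℝ) else 0) * π p.1 p.2)
      rw [Finset.sum_congr rfl fun x _ => by rw [ite_mul, one_mul, zero_mul, mul_ite, mul_zero]]
      rw [Finset.sum_ite_eq Finset.univ p.1 (fun x => ν' x * π p.1 p.2)]
      simp
    | succ t ih =>
      show (∑ q : X × A, M.saDist ν' π t q * M.P q.1 q.2 p.1) * π p.1 p.2 = _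
      rw [Finset.sum_congr rfl fun q _ => by rw [ih q, Finset.sum_mul]]
      rw [Finset.sum_comm, Finset.sum_mul]
      refine Finset.sum_congr rfl fun x _ => ?_
      show (∑ q : X × A, ν' x * M.saDist (fun y => if y = x then (1:ℝ) else 0) π t q
            * M.P q.1 q.2 p.1) * π p.1 p.2
          = ν' x * ((∑ q : X × A, M.saDist (fun y => if y = x then (1:ℝ) else 0) π t q
            * M.P q.1 q.2 p.1) * π p.1 p.2)
      rw [Finset.sum_mul, Finset.sum_mul, Finset.mul_sum]
      exact Finset.sum_congr rfl fun q _ => by ring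
  unfold FinMDP.occFrom
  have h2 : (∑' t : ℕ, M.γ ^ t * M.saDist ν' π t p)
      = ∑ x, ν' x * ∑' t : ℕ, M.γ ^ t * M.saDist (fun y => if y = x then 1 else 0) π t p := by
    have h3 : ∀ t : ℕ, M.γ ^ t * M.saDist ν' π t p
        = ∑ x, ν' x * (M.γ ^ t * M.saDist (fun y => if y = x then 1 else 0) π t p) := by
      intro t
      rw [h1 t, Finset.mul_sum]
      exact Finset.sum_congr rfl fun x _ => by ring
    rw [tsum_congr h3, Summable.tsum_finsetSum (fun x _ => Summable.mul_left _
      (M.summable_saDist (hδ x) hπ p))]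
    exact Finset.sum_congr rfl fun x _ => tsum_mul_left
  rw [h2, Finset.mul_sum]
  exact Finset.sum_congr rfl fun x _ => by ring


lemma sum_mul_sub_helper {ι : Type*} [Fintype ι] (c d : ℝ) (f g : ι → ℝ) :
    ∑ i, c * (f i - d * g i) = c * ((∑ i, f i) - d * ∑ i, g i) := by
  simp only [mul_sub, Finset.sum_sub_distrib, Finset.mul_sum]

/-- Adjointness of `Tadj` and `Tflow`. -/
lemma sum_mul_Tadj (μ : X × A → ℝ) (u : X → ℝ) :
    ∑ p : X × A, μ p * M.Tadj u p = ∑ x, M.Tflow μ x * u x := by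
  unfold FinMDP.Tadj FinMDP.Tflow
  have e1 : ∑ p : X × A, μ p * u p.1 = ∑ x, (∑ a, μ (x, a)) * u x := by
    rw [Fintype.sum_prod_type]
    exact Finset.sum_congr rfl fun x _ => by rw [Finset.sum_mul]
  have e2 : ∑ p : X × A, μ p * ∑ x', M.P p.1 p.2 x' * u x'
      = ∑ x', (∑ p : X × A, μ p * M.P p.1 p.2 x') * u x' := by
    simp only [Finset.mul_sum]
    rw [Finset.sum_comm]
    refine Finset.sum_congr rfl fun x' _ => ?_
    rw [Finset.sum_mul]
    exact Finset.sum_congr rfl fun p _ => by ring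
  have hL : ∑ p : X × A, μ p * (1 / (1 - M.γ) * (u p.1 - M.γ * ∑ x', M.P p.1 p.2 x' * u x'))
      = 1 / (1 - M.γ) * ((∑ p : X × A, μ p * u p.1)
          - M.γ * ∑ p : X × A, μ p * ∑ x', M.P p.1 p.2 x' * u x') := by
    rw [Finset.sum_congr rfl fun p _ =>
      (by ring : μ p * (1 / (1 - M.γ) * (u p.1 - M.γ * ∑ x', M.P p.1 p.2 x' * u x'))
        = 1 / (1 - M.γ) * (μ p * u p.1 - M.γ * (μ p * ∑ x', M.P p.1 p.2 x' * u x')))]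
    exact sum_mul_sub_helper _ _ _ _
  have hR : ∑ x, 1 / (1 - M.γ) * ((∑ a, μ (x, a)) - M.γ * ∑ p : X × A, μ p * M.P p.1 p.2 x) * u x
      = 1 / (1 - M.γ) * ((∑ x, (∑ a, μ (x, a)) * u x)
          - M.γ * ∑ x, (∑ p : X × A, μ p * M.P p.1 p.2 x) * u x) := by
    rw [Finset.sum_congr rfl fun x _ =>
      (by ring : 1 / (1 - M.γ) * ((∑ a, μ (x, a)) - M.γ * ∑ p : X × A, μ p * M.P p.1 p.2 x) * u x
        = 1 / (1 - M.γ) * ((∑ a, μ (x, a)) * u x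
            - M.γ * ((∑ p : X × A, μ p * M.P p.1 p.2 x) * u x)))]
    exact sum_mul_sub_helper _ _ _ _
  rw [hL, hR, e1, e2]

/-- The occupancy measure satisfies the Bellman flow constraint. -/
lemma Tflow_occFrom {ν' : X → ℝ} {π : X → A → ℝ} (hν : ∀ x, 0 ≤ ν' x)
    (hπ : FinMDP.IsPolicy π) (x : X) :
    M.Tflow (M.occFrom ν' π) x = ν' x := by
  unfold FinMDP.Tflow
  have h1 : ∑ a, M.occFrom ν' π (x, a)
      = (1 - M.γ) * ν' x + M.γ * ∑ q : X × A, M.occFrom ν' π q * M.P q.1 q.2 x := by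
    calc ∑ a, M.occFrom ν' π (x, a)
        = ∑ a, ((1 - M.γ) * ν' x
            + M.γ * ∑ q : X × A, M.occFrom ν' π q * M.P q.1 q.2 x) * π x a :=
          Finset.sum_congr rfl fun a _ => by rw [M.occFrom_rec hν hπ (x, a)]; ring
      _ = ((1 - M.γ) * ν' x + M.γ * ∑ q : X × A, M.occFrom ν' π q * M.P q.1 q.2 x)
            * ∑ a, π x a := (Finset.mul_sum _ _ _).symm
      _ = _ := by rw [hπ.2, mul_one]
  rw [h1]
  field_simp
  rw [add_sub_cancel_right]
  exact mul_div_cancel_left₀ _ (ne_of_gt M.one_sub_gamma_pos)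

lemma inducedPolicy_isPolicy {μ : X × A → ℝ} (hμ : ∀ p, 0 ≤ μ p) :
    FinMDP.IsPolicy (inducedPolicy μ) := by
  constructor
  · intro x a
    unfold inducedPolicy
    split
    · positivity
    · exact div_nonneg (hμ (x, a)) (Finset.sum_nonneg fun a' _ => hμ (x, a'))
  · intro x
    unfold inducedPolicy
    by_cases h : (∑ a' : A, μ (x, a')) = 0
    · simp only [h, if_true]
      rw [Finset.sum_const, Finset.card_univ, nsmul_eq_mul, mul_one_div,
        div_self (Nat.cast_ne_zero.2 (Fintype.card_ne_zero))]
    · simp only [h, if_false]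
      rw [← Finset.sum_div, div_self h]

lemma induced_decomp {μ : X × A → ℝ} (hμ : ∀ p, 0 ≤ μ p) (x : X) (a : A) :
    μ (x, a) = (∑ a', μ (x, a')) * inducedPolicy μ x a := by
  by_cases h : (∑ a' : A, μ (x, a')) = 0
  · have h0 : μ (x, a) = 0 := by
      have := (Finset.sum_eq_zero_iff_of_nonneg (fun a' _ => hμ (x, a'))).1 h
      exact this a (Finset.mem_univ a)
    rw [h0, h, zero_mul]
  · unfold inducedPolicy
    simp only [h, if_false]
    field_simp


lemma cost_eq_value {π : X → A → ℝ} (c : X × A → ℝ) (hπ : FinMDP.IsPolicy π) :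
    M.cost c π = ∑ x, M.ν x * M.value c π x := by
  unfold FinMDP.cost FinMDP.occ
  rw [Finset.sum_congr rfl fun p _ => by rw [M.occFrom_apply hπ p, Finset.sum_mul]]
  rw [Finset.sum_comm]
  unfold FinMDP.value
  refine Finset.sum_congr rfl fun x _ => ?_
  rw [Finset.mul_sum]
  exact Finset.sum_congr rfl fun p _ => by ring

lemma value_bellman (c : X × A → ℝ) {π : X → A → ℝ} (hπ : FinMDP.IsPolicy π) (x : X) :
    M.value c π x = (1 - M.γ) * (∑ a, π x a * c (x, a))
      + M.γ * ∑ x', (∑ a, π x a * M.P x a x') * M.value c π x' := by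
  have hδ : ∀ y : X, (0:ℝ) ≤ if y = x then 1 else 0 := fun y => by positivity
  have ind : ∀ f : X → ℝ, ∑ y, (if y = x then (1:ℝ) else 0) * f y = f x := by
    intro f
    rw [Finset.sum_congr rfl fun y _ => by rw [ite_mul, one_mul, zero_mul]]
    simp [Finset.sum_ite_eq']
  have h1 : ∑ p : X × A, ((if p.1 = x then (1:ℝ) else 0) * π p.1 p.2) * c p
      = ∑ a, π x a * c (x, a) := by
    rw [Fintype.sum_prod_type]
    dsimp only
    rw [Finset.sum_congr rfl fun x1 _ => (by
      rw [Finset.mul_sum]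
      exact Finset.sum_congr rfl fun a _ => by ring :
        ∑ a, ((if x1 = x then (1:ℝ) else 0) * π x1 a) * c (x1, a)
          = (if x1 = x then (1:ℝ) else 0) * ∑ a, π x1 a * c (x1, a))]
    exact ind _
  have hν'' : ∀ x', (∑ q : X × A, ((if q.1 = x then (1:ℝ) else 0) * π q.1 q.2) * M.P q.1 q.2 x')
      = ∑ a, π x a * M.P x a x' := by
    intro x'
    rw [Fintype.sum_prod_type]
    dsimp only
    rw [Finset.sum_congr rfl fun x1 _ => (by
      rw [Finset.mul_sum]
      exact Finset.sum_congr rfl fun a _ => by ring :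
        ∑ a, ((if x1 = x then (1:ℝ) else 0) * π x1 a) * M.P x1 a x'
          = (if x1 = x then (1:ℝ) else 0) * ∑ a, π x1 a * M.P x1 a x')]
    exact ind _
  have h2 : ∑ p : X × A,
        M.occFrom (fun x' => ∑ q : X × A,
          ((if q.1 = x then (1:ℝ) else 0) * π q.1 q.2) * M.P q.1 q.2 x') π p * c p
      = ∑ x', (∑ a, π x a * M.P x a x') * M.value c π x' := by
    rw [Finset.sum_congr rfl fun p _ => by rw [M.occFrom_apply hπ p, Finset.sum_mul]]
    rw [Finset.sum_comm]
    refine Finset.sum_congr rfl fun x' _ => ?_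
    rw [hν'' x']
    unfold FinMDP.value
    rw [Finset.mul_sum]
    exact Finset.sum_congr rfl fun p _ => by ring
  show ∑ p : X × A, M.occFrom (fun y => if y = x then (1:ℝ) else 0) π p * c p = _
  rw [Finset.sum_congr rfl fun p _ => by rw [M.occFrom_front hδ hπ p]]
  rw [Finset.sum_congr rfl fun p _ => (add_mul _ _ _ :
    ((1 - M.γ) * ((if p.1 = x then (1:ℝ) else 0) * π p.1 p.2)
        + M.γ * M.occFrom (fun x' => ∑ q : X × A,
            ((if q.1 = x then (1:ℝ) else 0) * π q.1 q.2) * M.P q.1 q.2 x') π p) * c p = _)]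
  rw [Finset.sum_add_distrib]
  congr 1
  · rw [← h1, Finset.mul_sum]
    exact Finset.sum_congr rfl fun p _ => by ring
  · rw [← h2, Finset.mul_sum]
    exact Finset.sum_congr rfl fun p _ => by ring

lemma sum_policy_sub_TadjV (c : X × A → ℝ) {π : X → A → ℝ} (hπ : FinMDP.IsPolicy π) (x : X) :
    ∑ a, π x a * (c (x, a) - M.Tadj (M.value c π) (x, a)) = 0 := by
  have hb := M.value_bellman c hπ x
  unfold FinMDP.Tadj
  have e1 : ∑ a, π x a * (c (x, a)
        - 1 / (1 - M.γ) * (M.value c π x - M.γ * ∑ x', M.P x a x' * M.value c π x'))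
      = (∑ a, π x a * c (x, a)) - 1 / (1 - M.γ) * (∑ a, π x a * M.value c π x)
        + M.γ / (1 - M.γ) * ∑ a, π x a * ∑ x', M.P x a x' * M.value c π x' := by
    rw [Finset.sum_congr rfl fun a _ => (by ring : π x a * (c (x, a)
        - 1 / (1 - M.γ) * (M.value c π x - M.γ * ∑ x', M.P x a x' * M.value c π x'))
      = π x a * c (x, a) - 1 / (1 - M.γ) * (π x a * M.value c π x)
        + M.γ / (1 - M.γ) * (π x a * ∑ x', M.P x a x' * M.value c π x'))]
    rw [Finset.sum_add_distrib, Finset.sum_sub_distrib, ← Finset.mul_sum, ← Finset.mul_sum]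
  have e2 : ∑ a, π x a * M.value c π x = M.value c π x := by
    rw [← Finset.sum_mul, hπ.2, one_mul]
  have e3 : ∑ a, π x a * ∑ x', M.P x a x' * M.value c π x'
      = ∑ x', (∑ a, π x a * M.P x a x') * M.value c π x' := by
    simp only [Finset.mul_sum]
    rw [Finset.sum_comm]
    refine Finset.sum_congr rfl fun x' _ => ?_
    rw [Finset.sum_mul]
    exact Finset.sum_congr rfl fun a _ => by ring
  rw [e1, e2, e3, hb]
  have hγ : (1:ℝ) - M.γ ≠ 0 := ne_of_gt M.one_sub_gamma_pos
  field_simp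
  ring

lemma sum_mu_sub_TadjV (μ : X × A → ℝ) (hμ : ∀ p, 0 ≤ μ p) (c : X × A → ℝ) :
    ∑ p : X × A, μ p * (c p - M.Tadj (M.value c (inducedPolicy μ)) p) = 0 := by
  have hπ := inducedPolicy_isPolicy hμ
  rw [Fintype.sum_prod_type]
  refine Finset.sum_eq_zero fun x _ => ?_
  rw [Finset.sum_congr rfl fun a _ => by
    rw [induced_decomp hμ x a, mul_assoc]]
  rw [← Finset.mul_sum, M.sum_policy_sub_TadjV c hπ x, mul_zero]

lemma abs_sum_mul_le_of_abs_le {ι : Type*} [Fintype ι] (f g : ι → ℝ) {B : ℝ}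
    (hg : ∀ i, |g i| ≤ B) : |∑ i, f i * g i| ≤ (∑ i, |f i|) * B := by
  calc |∑ i, f i * g i| ≤ ∑ i, |f i * g i| := Finset.abs_sum_le_sum_abs _ _
    _ ≤ ∑ i, |f i| * B := Finset.sum_le_sum fun i _ => by
        rw [abs_mul]
        exact mul_le_mul_of_nonneg_left (hg i) (abs_nonneg _)
    _ = (∑ i, |f i|) * B := (Finset.sum_mul _ _ _).symm

lemma abs_Tadj_le {u : X → ℝ} {B : ℝ} (hB : ∀ x, |u x| ≤ B) (p : X × A) :
    |M.Tadj u p| ≤ (1 + M.γ) / (1 - M.γ) * B := by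
  have hB0 : 0 ≤ B := le_trans (abs_nonneg _) (hB (Classical.arbitrary X))
  have h1 : |∑ x', M.P p.1 p.2 x' * u x'| ≤ B := by
    calc |∑ x', M.P p.1 p.2 x' * u x'| ≤ ∑ x', |M.P p.1 p.2 x' * u x'| :=
        Finset.abs_sum_le_sum_abs _ _
      _ ≤ ∑ x', M.P p.1 p.2 x' * B := Finset.sum_le_sum fun x' _ => by
          rw [abs_mul, abs_of_nonneg (M.P_nonneg p.1 p.2 x')]
          exact mul_le_mul_of_nonneg_left (hB x') (M.P_nonneg p.1 p.2 x')
      _ = B := by rw [← Finset.sum_mul, M.P_sum, one_mul]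
  unfold FinMDP.Tadj
  rw [abs_mul, abs_of_pos (one_div_pos.2 M.one_sub_gamma_pos)]
  have h2 : |u p.1 - M.γ * ∑ x', M.P p.1 p.2 x' * u x'| ≤ B + M.γ * B := by
    have h3 : |M.γ * ∑ x', M.P p.1 p.2 x' * u x'| ≤ M.γ * B := by
      rw [abs_mul, abs_of_pos M.γ_pos]
      exact mul_le_mul_of_nonneg_left h1 M.γ_pos.le
    have := abs_sub (u p.1) (M.γ * ∑ x', M.P p.1 p.2 x' * u x')
    linarith [hB p.1]
  calc 1 / (1 - M.γ) * |u p.1 - M.γ * ∑ x', M.P p.1 p.2 x' * u x'|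
      ≤ 1 / (1 - M.γ) * (B + M.γ * B) :=
        mul_le_mul_of_nonneg_left h2 (one_div_pos.2 M.one_sub_gamma_pos).le
    _ = (1 + M.γ) / (1 - M.γ) * B := by ring

lemma sum_abs_Tflow_le {μ : X × A → ℝ} (hμ0 : ∀ p, 0 ≤ μ p)
    (hμ1 : ∑ p : X × A, μ p = 1) :
    ∑ x, |M.Tflow μ x| ≤ (1 + M.γ) / (1 - M.γ) := by
  have step : ∀ x, |M.Tflow μ x|
      ≤ 1 / (1 - M.γ) * ((∑ a, μ (x, a)) + M.γ * ∑ p : X × A, μ p * M.P p.1 p.2 x) := by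
    intro x
    unfold FinMDP.Tflow
    have hA : 0 ≤ ∑ a, μ (x, a) := Finset.sum_nonneg fun a _ => hμ0 (x, a)
    have hb : 0 ≤ ∑ p : X × A, μ p * M.P p.1 p.2 x :=
      Finset.sum_nonneg fun p _ => mul_nonneg (hμ0 p) (M.P_nonneg p.1 p.2 x)
    rw [abs_mul, abs_of_pos (one_div_pos.2 M.one_sub_gamma_pos)]
    refine mul_le_mul_of_nonneg_left (abs_le.2 ⟨?_, ?_⟩) (one_div_pos.2 M.one_sub_gamma_pos).le
    · nlinarith [M.γ_pos]
    · nlinarith [M.γ_pos]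
  calc ∑ x, |M.Tflow μ x|
      ≤ ∑ x, 1 / (1 - M.γ) * ((∑ a, μ (x, a)) + M.γ * ∑ p : X × A, μ p * M.P p.1 p.2 x) :=
        Finset.sum_le_sum fun x _ => step x
    _ = 1 / (1 - M.γ) * ((∑ x, ∑ a, μ (x, a))
          + M.γ * ∑ x, ∑ p : X × A, μ p * M.P p.1 p.2 x) := by
        rw [← Finset.mul_sum, Finset.sum_add_distrib, ← Finset.mul_sum]
    _ = (1 + M.γ) / (1 - M.γ) := by
        have hx1 : ∑ x, ∑ a, μ (x, a) = 1 := by rw [← Fintype.sum_prod_type]; exact hμ1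
        have hx2 : ∑ x, ∑ p : X × A, μ p * M.P p.1 p.2 x = 1 := by
          rw [Finset.sum_comm]
          rw [Finset.sum_congr rfl fun p _ => by rw [← Finset.mul_sum, M.P_sum, mul_one]]
          exact hμ1
        rw [hx1, hx2]
        ring

lemma Tadj_sub (u v : X → ℝ) (p : X × A) :
    M.Tadj u p - M.Tadj v p = M.Tadj (fun x => u x - v x) p := by
  unfold FinMDP.Tadj
  rw [Finset.sum_congr rfl fun x' _ => (mul_sub _ _ _ :
    M.P p.1 p.2 x' * (u x' - v x') = _), Finset.sum_sub_distrib]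
  ring

-- ENDAUX
end FinMDP

lemma sum_sub_mul_sub {ι : Type*} [Fintype ι] (f g u v : ι → ℝ) :
    ∑ i, (f i - g i) * (u i - v i)
      = ((∑ i, f i * u i) - ∑ i, f i * v i) - ((∑ i, g i * u i) - ∑ i, g i * v i) := by
  rw [← Finset.sum_sub_distrib, ← Finset.sum_sub_distrib, ← Finset.sum_sub_distrib]
  exact Finset.sum_congr rfl fun i _ => by ring

lemma abs_sum_lam_mul_le {nu : ℕ} {β : ℝ} (hβ : 0 ≤ β) {lam' : Fin nu → ℝ}
    (h : lam' ∈ lamSet nu β) {Ψ : Fin nu → X → ℝ} (hΨ : ∀ k x, |Ψ k x| ≤ 1) (x : X) :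
    |∑ k, lam' k * Ψ k x| ≤ β := by
  have h1 : |∑ k, lam' k * Ψ k x| ≤ ∑ k, |lam' k| := by
    calc |∑ k, lam' k * Ψ k x| ≤ ∑ k, |lam' k * Ψ k x| := Finset.abs_sum_le_sum_abs _ _
      _ ≤ ∑ k, |lam' k| := Finset.sum_le_sum fun k _ => by
          rw [abs_mul]
          exact (mul_le_mul_of_nonneg_left (hΨ k x) (abs_nonneg _)).trans_eq (mul_one _)
  refine h1.trans ?_
  rcases Nat.eq_zero_or_pos nu with h0 | h0
  · subst h0
    simpa using hβ
  · have h' : Real.sqrt (∑ k, lam' k ^ 2) ≤ β / Real.sqrt nu := h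
    have hcs : (∑ k, |lam' k| * 1) ^ 2 ≤ (∑ k, |lam' k| ^ 2) * ∑ _k : Fin nu, (1:ℝ) ^ 2 :=
      Finset.sum_mul_sq_le_sq_mul_sq _ _ _
    simp only [mul_one, one_pow, Finset.sum_const, Finset.card_univ, Fintype.card_fin,
      nsmul_eq_mul, sq_abs] at hcs
    have hs := Real.sqrt_le_sqrt hcs
    rw [Real.sqrt_sq (Finset.sum_nonneg fun k _ => abs_nonneg (lam' k))] at hs
    refine hs.trans ?_
    rw [Real.sqrt_mul (Finset.sum_nonneg fun k _ => sq_nonneg _)]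
    have hnu : (0:ℝ) < Real.sqrt nu := Real.sqrt_pos.2 (by exact_mod_cast h0)
    calc Real.sqrt (∑ k, lam' k ^ 2) * Real.sqrt nu
        ≤ (β / Real.sqrt nu) * Real.sqrt nu :=
          mul_le_mul_of_nonneg_right h' (Real.sqrt_nonneg _)
      _ = β := div_mul_cancel₀ β (ne_of_gt hnu)

/-- From approximate saddle points to nearly optimal policies: the
suboptimality gap of the policy `π_θ` extracted from a feasible point `(θ, λ, w)`
is bounded by the saddle-point residual plus the approximation error. -/
theorem saddle_point_to_policy (M : FinMDP X A) {nm nu nc : ℕ} [NeZero nc]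
    (Φ : Fin nm → X × A → ℝ) (hΦ : ∀ i, IsDist (Φ i))
    (Ψ : Fin nu → X → ℝ) (hΨ : ∀ k x, |Ψ k x| ≤ 1)
    (c : Fin nc → X × A → ℝ) (hc : ∀ j p, |c j p| ≤ 1)
    (β : ℝ) (hβ : 2 ≤ β)
    (πE : X → A → ℝ) (hπE : FinMDP.IsPolicy πE)
    (πA : X → A → ℝ) (hπA : IsApprentice M c πE πA)
    (θ : Fin nm → ℝ) (hθ : simplexPt θ)
    (lam : Fin nu → ℝ) (hlam : lam ∈ lamSet nu β)
    (w : Fin nc → ℝ) (hw : simplexPt w)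
    (iθ : Fin nc)
    (hiθ : ∀ j, M.cost (c j) (inducedPolicy (fun p => ∑ i, θ i * Φ i p))
          - M.cost (c j) πE
        ≤ M.cost (c iθ) (inducedPolicy (fun p => ∑ i, θ i * Φ i p))
          - M.cost (c iθ) πE) :
    gapMax M c πE (inducedPolicy (fun p => ∑ i, θ i * Φ i p)) - gapMax M c πE πA
      ≤ epsSad M Φ Ψ c πE β θ lam w
        + 2 / (1 - M.γ) *
          (β * sInf {v : ℝ | ∃ θ', simplexPt θ' ∧
              v = l1 (fun p : X × A => (∑ i, θ' i * Φ i p) - M.occ πA p)}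
            + sInf {v : ℝ | ∃ lam' ∈ lamSet nu β,
              v = linf (fun x => (∑ k, lam' k * Ψ k x)
                - M.value (c iθ) (inducedPolicy (fun p => ∑ i, θ i * Φ i p)) x)}) := by

  classical
  set μθ : X × A → ℝ := fun p => ∑ i, θ i * Φ i p with hμθdef
  set πθ := inducedPolicy μθ with hπθdef
  set V : X → ℝ := M.value (c iθ) πθ with hVdef
  set μE := M.occ πE with hμEdef
  set μA := M.occ πA with hμAdef
  have h1γ := M.one_sub_gamma_pos
  have hβ0 : (0:ℝ) ≤ β := by linarith
  have hmass : ∀ θ' : Fin nm → ℝ, simplexPt θ' →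
      (∀ p, 0 ≤ ∑ i, θ' i * Φ i p) ∧ (∑ p : X × A, ∑ i, θ' i * Φ i p) = 1 := by
    intro θ' hθ'
    constructor
    · exact fun p => Finset.sum_nonneg fun i _ => mul_nonneg (hθ'.1 i) ((hΦ i).1 p)
    · rw [Finset.sum_comm,
        Finset.sum_congr rfl fun i _ => by rw [← Finset.mul_sum, (hΦ i).2, mul_one]]
      exact hθ'.2
  have hμθ0 : ∀ p, 0 ≤ μθ p := (hmass θ hθ).1
  have hμθ1 : ∑ p : X × A, μθ p = 1 := (hmass θ hθ).2
  have hπθ : FinMDP.IsPolicy πθ := FinMDP.inducedPolicy_isPolicy hμθ0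
  have hπA' : FinMDP.IsPolicy πA := hπA.1
  have hE0 : ∀ p, 0 ≤ μE p := fun p => M.occFrom_nonneg M.ν_nonneg hπE.1 p
  have hE1 : ∑ p : X × A, μE p = 1 := by
    rw [hμEdef]
    show ∑ p : X × A, M.occFrom M.ν πE p = 1
    rw [M.occFrom_sum M.ν_nonneg hπE, M.ν_sum]
  have hA0 : ∀ p, 0 ≤ μA p := fun p => M.occFrom_nonneg M.ν_nonneg hπA'.1 p
  have hA1 : ∑ p : X × A, μA p = 1 := by
    rw [hμAdef]
    show ∑ p : X × A, M.occFrom M.ν πA p = 1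
    rw [M.occFrom_sum M.ν_nonneg hπA', M.ν_sum]
  -- pointwise bounds
  have hcwB : ∀ w' : Fin nc → ℝ, simplexPt w' → ∀ p, |∑ j, w' j * c j p| ≤ 1 := by
    intro w' hw' p
    calc |∑ j, w' j * c j p| ≤ ∑ j, |w' j * c j p| := Finset.abs_sum_le_sum_abs _ _
      _ ≤ ∑ j, w' j := Finset.sum_le_sum fun j _ => by
          rw [abs_mul, abs_of_nonneg (hw'.1 j)]
          exact (mul_le_mul_of_nonneg_left (hc j p) (hw'.1 j)).trans_eq (mul_one _)
      _ = 1 := hw'.2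
  have hgB : ∀ lam' ∈ lamSet nu β, ∀ w' : Fin nc → ℝ, simplexPt w' →
      ∀ p : X × A, |(∑ j, w' j * c j p) - M.Tadj (fun x => ∑ k, lam' k * Ψ k x) p|
        ≤ 1 + (1 + M.γ) / (1 - M.γ) * β := by
    intro lam' hlam' w' hw' p
    have hu := M.abs_Tadj_le (fun x => abs_sum_lam_mul_le hβ0 hlam' hΨ x) p
    have htr := abs_sub (∑ j, w' j * c j p) (M.Tadj (fun x => ∑ k, lam' k * Ψ k x) p)
    linarith [hcwB w' hw' p]
  have hBnn : (0:ℝ) ≤ 1 + (1 + M.γ) / (1 - M.γ) * β := by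
    have := div_nonneg (by linarith [M.γ_pos] : (0:ℝ) ≤ 1 + M.γ) h1γ.le
    nlinarith
  have hsub2 : ∀ θ' : Fin nm → ℝ, simplexPt θ' →
      ∑ p : X × A, |(∑ i, θ' i * Φ i p) - μE p| ≤ 2 := by
    intro θ' hθ'
    calc ∑ p : X × A, |(∑ i, θ' i * Φ i p) - μE p|
        ≤ ∑ p : X × A, ((∑ i, θ' i * Φ i p) + μE p) := Finset.sum_le_sum fun p _ => by
          have h := abs_sub (∑ i, θ' i * Φ i p) (μE p)
          rw [abs_of_nonneg ((hmass θ' hθ').1 p), abs_of_nonneg (hE0 p)] at h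
          exact h
      _ = 2 := by rw [Finset.sum_add_distrib, (hmass θ' hθ').2, hE1]; norm_num
  -- boundedness of the Lagrangian on the feasible sets
  have hLrB : ∀ θ' : Fin nm → ℝ, simplexPt θ' → ∀ lam' ∈ lamSet nu β,
      ∀ w' : Fin nc → ℝ, simplexPt w' →
      |Lr M Φ Ψ c πE θ' lam' w'| ≤ 2 * (1 + (1 + M.γ) / (1 - M.γ) * β) := by
    intro θ' hθ' lam' hlam' w' hw'
    have h1 : |Lr M Φ Ψ c πE θ' lam' w'|
        ≤ (∑ p : X × A, |(∑ i, θ' i * Φ i p) - μE p|) * (1 + (1 + M.γ) / (1 - M.γ) * β) := by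
      show |∑ p : X × A, ((∑ i, θ' i * Φ i p) - μE p)
          * ((∑ j, w' j * c j p) - M.Tadj (fun x => ∑ k, lam' k * Ψ k x) p)| ≤ _
      exact FinMDP.abs_sum_mul_le_of_abs_le _ _ (hgB lam' hlam' w' hw')
    calc |Lr M Φ Ψ c πE θ' lam' w'| ≤ _ := h1
      _ ≤ 2 * (1 + (1 + M.γ) / (1 - M.γ) * β) :=
        mul_le_mul_of_nonneg_right (hsub2 θ' hθ') hBnn
  have hSup : ∀ lam' ∈ lamSet nu β, ∀ w' : Fin nc → ℝ, simplexPt w' →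
      Lr M Φ Ψ c πE θ lam' w'
        ≤ sSup {v | ∃ lam' ∈ lamSet nu β, ∃ w', simplexPt w' ∧ v = Lr M Φ Ψ c πE θ lam' w'} := by
    intro lam' hlam' w' hw'
    refine le_csSup ⟨2 * (1 + (1 + M.γ) / (1 - M.γ) * β), fun v hv => ?_⟩
      ⟨lam', hlam', w', hw', rfl⟩
    obtain ⟨l2, hl2, w2, hw2, rfl⟩ := hv
    exact (le_abs_self _).trans (hLrB θ hθ l2 hl2 w2 hw2)
  have hInf : ∀ θ' : Fin nm → ℝ, simplexPt θ' →
      sInf {v | ∃ θ', simplexPt θ' ∧ v = Lr M Φ Ψ c πE θ' lam w} ≤ Lr M Φ Ψ c πE θ' lam w := by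
    intro θ' hθ'
    refine csInf_le ⟨-(2 * (1 + (1 + M.γ) / (1 - M.γ) * β)), fun v hv => ?_⟩ ⟨θ', hθ', rfl⟩
    obtain ⟨θ2, hθ2, rfl⟩ := hv
    exact (abs_le.1 (hLrB θ2 hθ2 lam hlam w hw)).1
  -- adjoint identities
  have hadjE : ∀ v : X → ℝ, ∑ p : X × A, μE p * M.Tadj v p = ∑ x, M.ν x * v x := by
    intro v
    rw [hμEdef]
    show ∑ p : X × A, M.occFrom M.ν πE p * M.Tadj v p = _
    rw [M.sum_mul_Tadj]
    exact Finset.sum_congr rfl fun x _ => by rw [M.Tflow_occFrom M.ν_nonneg hπE x]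
  have hadjA : ∀ v : X → ℝ, ∑ p : X × A, μA p * M.Tadj v p = ∑ x, M.ν x * v x := by
    intro v
    rw [hμAdef]
    show ∑ p : X × A, M.occFrom M.ν πA p * M.Tadj v p = _
    rw [M.sum_mul_Tadj]
    exact Finset.sum_congr rfl fun x _ => by rw [M.Tflow_occFrom M.ν_nonneg hπA' x]
  have hwstar : simplexPt (fun j : Fin nc => if j = iθ then (1:ℝ) else 0) := by
    constructor
    · intro j; dsimp only; split <;> norm_num
    · simp
  have hcwstar : ∀ p : X × A, (∑ j, (if j = iθ then (1:ℝ) else 0) * c j p) = c iθ p := by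
    intro p
    rw [Finset.sum_congr rfl fun j _ => by rw [ite_mul, one_mul, zero_mul]]
    simp
  -- key identity 1
  have key1 : ∀ lam' : Fin nu → ℝ,
      M.cost (c iθ) πθ - M.cost (c iθ) πE
        = Lr M Φ Ψ c πE θ lam' (fun j => if j = iθ then (1:ℝ) else 0)
          + ∑ x, (M.Tflow μθ x - M.ν x) * ((∑ k, lam' k * Ψ k x) - V x) := by
    intro lam'
    set u' : X → ℝ := fun x => ∑ k, lam' k * Ψ k x with hu'def
    have hcost : M.cost (c iθ) πθ = ∑ x, M.ν x * V x := M.cost_eq_value (c iθ) hπθ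
    have hcostE : M.cost (c iθ) πE = ∑ p : X × A, μE p * c iθ p := rfl
    have h5 : ∀ v : X → ℝ, ∑ p : X × A, μθ p * M.Tadj v p = ∑ x, M.Tflow μθ x * v x :=
      fun v => M.sum_mul_Tadj μθ v
    have h3 : ∑ p : X × A, μθ p * c iθ p = ∑ x, M.Tflow μθ x * V x := by
      have h0 := M.sum_mu_sub_TadjV μθ hμθ0 (c iθ)
      rw [← hπθdef, ← hVdef] at h0
      rw [Finset.sum_congr rfl fun p _ => (mul_sub _ _ _ :
          μθ p * (c iθ p - M.Tadj V p) = _), Finset.sum_sub_distrib] at h0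
      rw [h5 V] at h0
      linarith
    have hLr : Lr M Φ Ψ c πE θ lam' (fun j => if j = iθ then (1:ℝ) else 0)
        = ((∑ p : X × A, μθ p * c iθ p) - ∑ p : X × A, μθ p * M.Tadj u' p)
          - ((∑ p : X × A, μE p * c iθ p) - ∑ p : X × A, μE p * M.Tadj u' p) := by
      show (∑ p : X × A, (μθ p - μE p)
          * ((∑ j, (if j = iθ then (1:ℝ) else 0) * c j p) - M.Tadj u' p)) = _
      rw [Finset.sum_congr rfl fun p _ => by rw [hcwstar p]]
      exact sum_sub_mul_sub μθ μE (fun p => c iθ p) (fun p => M.Tadj u' p)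
    have hE1' : ∑ x, (M.Tflow μθ x - M.ν x) * (u' x - V x)
        = ((∑ x, M.Tflow μθ x * u' x) - ∑ x, M.Tflow μθ x * V x)
          - ((∑ x, M.ν x * u' x) - ∑ x, M.ν x * V x) :=
      sum_sub_mul_sub (M.Tflow μθ) M.ν u' V
    rw [hcost, hcostE, hLr, hE1', h5 u', hadjE u']
    linarith [h3]
  -- key identity 2
  have key2 : ∀ θ' : Fin nm → ℝ, simplexPt θ' →
      Lr M Φ Ψ c πE θ' lam w
        = (∑ j, w j * (M.cost (c j) πA - M.cost (c j) πE))
          + ∑ p : X × A, ((∑ i, θ' i * Φ i p) - μA p)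
              * ((∑ j, w j * c j p) - M.Tadj (fun x => ∑ k, lam k * Ψ k x) p) := by
    intro θ' hθ'
    set u' : X → ℝ := fun x => ∑ k, lam k * Ψ k x with hu'def
    have hsplit : Lr M Φ Ψ c πE θ' lam w
        = ((∑ p : X × A, (∑ i, θ' i * Φ i p) * (∑ j, w j * c j p))
            - ∑ p : X × A, (∑ i, θ' i * Φ i p) * M.Tadj u' p)
          - ((∑ p : X × A, μE p * (∑ j, w j * c j p)) - ∑ p : X × A, μE p * M.Tadj u' p) := by
      show (∑ p : X × A, ((∑ i, θ' i * Φ i p) - μE p) * ((∑ j, w j * c j p) - M.Tadj u' p)) = _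
      exact sum_sub_mul_sub _ μE (fun p => ∑ j, w j * c j p) _
    have hE2 : ∑ p : X × A, ((∑ i, θ' i * Φ i p) - μA p) * ((∑ j, w j * c j p) - M.Tadj u' p)
        = ((∑ p : X × A, (∑ i, θ' i * Φ i p) * (∑ j, w j * c j p))
            - ∑ p : X × A, (∑ i, θ' i * Φ i p) * M.Tadj u' p)
          - ((∑ p : X × A, μA p * (∑ j, w j * c j p)) - ∑ p : X × A, μA p * M.Tadj u' p) :=
      sum_sub_mul_sub _ μA (fun p => ∑ j, w j * c j p) _
    have haA : ∑ p : X × A, μA p * (∑ j, w j * c j p) = ∑ j, w j * M.cost (c j) πA := by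
      rw [Finset.sum_congr rfl fun p _ => (Finset.mul_sum Finset.univ (fun j => w j * c j p) (μA p))]
      rw [Finset.sum_comm]
      refine Finset.sum_congr rfl fun j _ => ?_
      show ∑ p : X × A, μA p * (w j * c j p) = w j * ∑ p : X × A, M.occ πA p * c j p
      rw [Finset.mul_sum, ← hμAdef]
      exact Finset.sum_congr rfl fun p _ => by ring
    have haE : ∑ p : X × A, μE p * (∑ j, w j * c j p) = ∑ j, w j * M.cost (c j) πE := by
      rw [Finset.sum_congr rfl fun p _ => (Finset.mul_sum Finset.univ (fun j => w j * c j p) (μE p))]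
      rw [Finset.sum_comm]
      refine Finset.sum_congr rfl fun j _ => ?_
      show ∑ p : X × A, μE p * (w j * c j p) = w j * ∑ p : X × A, M.occ πE p * c j p
      rw [Finset.mul_sum, ← hμEdef]
      exact Finset.sum_congr rfl fun p _ => by ring
    have hwc : ∑ j, w j * (M.cost (c j) πA - M.cost (c j) πE)
        = (∑ j, w j * M.cost (c j) πA) - ∑ j, w j * M.cost (c j) πE := by
      rw [← Finset.sum_sub_distrib]
      exact Finset.sum_congr rfl fun j _ => by ring
    rw [hsplit, hwc, ← haA, ← haE, hE2, hadjA u', hadjE u']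
    ring
  -- the gap at πθ is attained at iθ
  have hgap : gapMax M c πE πθ = M.cost (c iθ) πθ - M.cost (c iθ) πE := by
    apply le_antisymm
    · exact Finset.sup'_le _ _ fun i _ => hiθ i
    · exact Finset.le_sup' (fun i => M.cost (c i) πθ - M.cost (c i) πE) (Finset.mem_univ iθ)
  have hga : ∑ j, w j * (M.cost (c j) πA - M.cost (c j) πE) ≤ gapMax M c πE πA := by
    calc ∑ j, w j * (M.cost (c j) πA - M.cost (c j) πE)
        ≤ ∑ j, w j * gapMax M c πE πA := Finset.sum_le_sum fun j _ =>
          mul_le_mul_of_nonneg_left (Finset.le_sup' (fun i => M.cost (c i) πA - M.cost (c i) πE) (Finset.mem_univ j)) (hw.1 j)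
      _ = gapMax M c πE πA := by rw [← Finset.sum_mul, hw.2, one_mul]
  -- error bounds
  have hlinfle : ∀ (f : X → ℝ) (x : X), |f x| ≤ linf f := fun f x =>
    Finset.le_sup' (fun i => |f i|) (Finset.mem_univ x)
  have hlinfnn : ∀ f : X → ℝ, 0 ≤ linf f := fun f =>
    (abs_nonneg (f (Classical.arbitrary X))).trans (hlinfle f (Classical.arbitrary X))
  have habs1 : ∀ lam' : Fin nu → ℝ,
      |∑ x, (M.Tflow μθ x - M.ν x) * ((∑ k, lam' k * Ψ k x) - V x)|
        ≤ 2 / (1 - M.γ) * linf (fun x => (∑ k, lam' k * Ψ k x) - V x) := by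
    intro lam'
    have hfl : ∑ x, |M.Tflow μθ x - M.ν x| ≤ 2 / (1 - M.γ) := by
      have e : (1 + M.γ) / (1 - M.γ) + 1 = 2 / (1 - M.γ) := by
        field_simp
        norm_num
      calc ∑ x, |M.Tflow μθ x - M.ν x| ≤ ∑ x, (|M.Tflow μθ x| + |M.ν x|) :=
          Finset.sum_le_sum fun x _ => abs_sub _ _
        _ = (∑ x, |M.Tflow μθ x|) + ∑ x, |M.ν x| := Finset.sum_add_distrib
        _ ≤ (1 + M.γ) / (1 - M.γ) + 1 := by
            refine add_le_add (M.sum_abs_Tflow_le hμθ0 hμθ1) ?_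
            rw [Finset.sum_congr rfl fun x _ => abs_of_nonneg (M.ν_nonneg x), M.ν_sum]
        _ = 2 / (1 - M.γ) := e
    calc |∑ x, (M.Tflow μθ x - M.ν x) * ((∑ k, lam' k * Ψ k x) - V x)|
        ≤ (∑ x, |M.Tflow μθ x - M.ν x|) * linf (fun x => (∑ k, lam' k * Ψ k x) - V x) :=
          FinMDP.abs_sum_mul_le_of_abs_le _ _ fun x =>
            hlinfle (fun x => (∑ k, lam' k * Ψ k x) - V x) x
      _ ≤ 2 / (1 - M.γ) * linf (fun x => (∑ k, lam' k * Ψ k x) - V x) :=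
          mul_le_mul_of_nonneg_right hfl (hlinfnn _)
  have hl1nn : ∀ f : X × A → ℝ, 0 ≤ l1 f := fun f =>
    Finset.sum_nonneg fun p _ => abs_nonneg _
  have hBle : 1 + (1 + M.γ) / (1 - M.γ) * β ≤ 2 * β / (1 - M.γ) := by
    rw [le_div_iff₀ h1γ]
    have e : (1 + (1 + M.γ) / (1 - M.γ) * β) * (1 - M.γ) = (1 - M.γ) + (1 + M.γ) * β := by
      field_simp
    rw [e]
    nlinarith [M.γ_pos, M.γ_lt_one,
      mul_nonneg (sub_nonneg.2 M.γ_lt_one.le) (by linarith : (0:ℝ) ≤ β - 1)]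
  have habs2 : ∀ θ' : Fin nm → ℝ, simplexPt θ' →
      |∑ p : X × A, ((∑ i, θ' i * Φ i p) - μA p)
          * ((∑ j, w j * c j p) - M.Tadj (fun x => ∑ k, lam k * Ψ k x) p)|
        ≤ 2 * β / (1 - M.γ) * l1 (fun p : X × A => (∑ i, θ' i * Φ i p) - μA p) := by
    intro θ' hθ'
    calc |∑ p : X × A, ((∑ i, θ' i * Φ i p) - μA p)
            * ((∑ j, w j * c j p) - M.Tadj (fun x => ∑ k, lam k * Ψ k x) p)|
        ≤ (∑ p : X × A, |(∑ i, θ' i * Φ i p) - μA p|) * (1 + (1 + M.γ) / (1 - M.γ) * β) :=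
          FinMDP.abs_sum_mul_le_of_abs_le _ _ (hgB lam hlam w hw)
      _ ≤ (∑ p : X × A, |(∑ i, θ' i * Φ i p) - μA p|) * (2 * β / (1 - M.γ)) :=
          mul_le_mul_of_nonneg_left hBle (hl1nn (fun p : X × A => (∑ i, θ' i * Φ i p) - μA p))
      _ = 2 * β / (1 - M.γ) * l1 (fun p : X × A => (∑ i, θ' i * Φ i p) - μA p) := mul_comm _ _
  have hes : epsSad M Φ Ψ c πE β θ lam w
      = sSup {v | ∃ lam' ∈ lamSet nu β, ∃ w', simplexPt w' ∧ v = Lr M Φ Ψ c πE θ lam' w'}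
        - sInf {v | ∃ θ', simplexPt θ' ∧ v = Lr M Φ Ψ c πE θ' lam w} := rfl
  -- main estimate for arbitrary feasible comparison points
  have main : ∀ θ' : Fin nm → ℝ, simplexPt θ' → ∀ lam' ∈ lamSet nu β,
      gapMax M c πE πθ - gapMax M c πE πA
        ≤ epsSad M Φ Ψ c πE β θ lam w
          + 2 / (1 - M.γ)
            * (β * l1 (fun p : X × A => (∑ i, θ' i * Φ i p) - μA p)
              + linf (fun x => (∑ k, lam' k * Ψ k x) - V x)) := by
    intro θ' hθ' lam' hlam'
    have h1 := key1 lam'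
    have h2 := key2 θ' hθ'
    have h4 := hSup lam' hlam' _ hwstar
    have h5 := hInf θ' hθ'
    have h6 := abs_le.1 (habs1 lam')
    have h7 := abs_le.1 (habs2 θ' hθ')
    rw [hgap, hes]
    have hexp : 2 / (1 - M.γ) * (β * l1 (fun p : X × A => (∑ i, θ' i * Φ i p) - μA p)
          + linf (fun x => (∑ k, lam' k * Ψ k x) - V x))
        = 2 * β / (1 - M.γ) * l1 (fun p : X × A => (∑ i, θ' i * Φ i p) - μA p)
          + 2 / (1 - M.γ) * linf (fun x => (∑ k, lam' k * Ψ k x) - V x) := by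
      ring
    linarith [hga, h6.2, h7.2]
  -- pass to the infima
  refine le_of_forall_pos_le_add fun ε hε => ?_
  have hK : (0:ℝ) < 2 / (1 - M.γ) := div_pos two_pos h1γ
  have hKb : (0:ℝ) < 2 / (1 - M.γ) * (β + 1) := by nlinarith
  set δ := ε / (2 / (1 - M.γ) * (β + 1)) with hδdef
  have hδ : 0 < δ := div_pos hε hKb
  set SA := {v : ℝ | ∃ θ', simplexPt θ' ∧ v = l1 (fun p : X × A => (∑ i, θ' i * Φ i p) - μA p)}
    with hSAdef
  set SB := {v : ℝ | ∃ lam' ∈ lamSet nu β,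
      v = linf (fun x => (∑ k, lam' k * Ψ k x) - V x)} with hSBdef
  have hSAne : SA.Nonempty := ⟨_, θ, hθ, rfl⟩
  have hSBne : SB.Nonempty := ⟨_, lam, hlam, rfl⟩
  have hSAbdd : BddBelow SA := ⟨0, fun v hv => by
    obtain ⟨θ', _, rfl⟩ := hv; exact hl1nn _⟩
  have hSBbdd : BddBelow SB := ⟨0, fun v hv => by
    obtain ⟨lam', _, rfl⟩ := hv; exact hlinfnn _⟩
  obtain ⟨vA, hvA, hvAlt⟩ := exists_lt_of_csInf_lt hSAne (lt_add_of_pos_right (sInf SA) hδ)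
  obtain ⟨θ', hθ', rfl⟩ := hvA
  obtain ⟨vB, hvB, hvBlt⟩ := exists_lt_of_csInf_lt hSBne (lt_add_of_pos_right (sInf SB) hδ)
  obtain ⟨lam', hlam', rfl⟩ := hvB
  have hm := main θ' hθ' lam' hlam'
  have s1 : β * l1 (fun p : X × A => (∑ i, θ' i * Φ i p) - μA p) ≤ β * (sInf SA + δ) :=
    mul_le_mul_of_nonneg_left hvAlt.le hβ0
  have s2 : β * l1 (fun p : X × A => (∑ i, θ' i * Φ i p) - μA p)
      + linf (fun x => (∑ k, lam' k * Ψ k x) - V x) ≤ β * (sInf SA + δ) + (sInf SB + δ) :=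
    add_le_add s1 hvBlt.le
  have s3 : 2 / (1 - M.γ)
        * (β * l1 (fun p : X × A => (∑ i, θ' i * Φ i p) - μA p)
          + linf (fun x => (∑ k, lam' k * Ψ k x) - V x))
      ≤ 2 / (1 - M.γ) * (β * (sInf SA + δ) + (sInf SB + δ)) :=
    mul_le_mul_of_nonneg_left s2 hK.le
  have hδeq : 2 / (1 - M.γ) * (β + 1) * δ = ε := by
    rw [hδdef]
    field_simp
  have expand : 2 / (1 - M.γ) * (β * (sInf SA + δ) + (sInf SB + δ))
      = 2 / (1 - M.γ) * (β * sInf SA + sInf SB) + 2 / (1 - M.γ) * (β + 1) * δ := by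
    ring
  linarith [hm, s3]
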